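/- The L1 centrality of a vertex v_k in the graph symmetrized with respect to v_1 (the graph doubled with the two copies of v_1 identified) equals the L1 centrality of v_k in the original graph with the multiplicity of v_1 replaced by η_· + η_1. Concretely, with distances in the symmetrized graph given by d'(v_i, v_{j'}) = d(v_i, v_1) + d(v_1, v_j) between an original vertex v_i and a copied vertex v_{j'}, the maximand in the L1 centrality formula over original vertices reduces to Σ_i η_i'(d(v_i,v_k) - d(v_i,v_j)) with η_1' = η_· + η_1 and η_i' = η_i for i ≠ 1, normalized by 2η_·. -/
import Mathlib


open Finset

/-- The L1 centrality of vertex `k` for a finite vertex set `V` with distances `d`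
and multiplicities `μ`. -/
noncomputable def L1Cent {V : Type*} [Fintype V] (d : V → V → ℝ) (μ : V → ℝ) (k : V) : ℝ :=
  1 - sSup ((fun j => max 0 ((∑ i, μ i * (d k i - d j i)) / ((∑ i, μ i) * d j k))) ''
      {j | j ≠ k})

/-- Distances in the graph symmetrized w.r.t. the vertex `v0`: the vertex set is
doubled (`Sum.inl` the original vertices, `Sum.inr` the copies, the copy of `v0`
coinciding with `v0`), and the distance between an original vertex and a copy
goes through `v0`. -/
def symDist {n : ℕ} (d : Fin n → Fin n → ℝ) (v0 : Fin n) :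
    Fin n ⊕ Fin n → Fin n ⊕ Fin n → ℝ
  | .inl i, .inl j => d i j
  | .inl i, .inr j => d i v0 + d v0 j
  | .inr i, .inl j => d i v0 + d v0 j
  | .inr i, .inr j => d i j

/-- The L1 centrality of an original vertex `v_k` in the graph symmetrized w.r.t.
`v0` (each copy carrying the multiplicity of its original) equals the L1 centrality
of `v_k` in the original graph with the multiplicity of `v0` replaced by `η_· + η_{v0}`. -/
theorem l1cent_symmetrized {n : ℕ} (d : Fin n → Fin n → ℝ)
    (hsymm : ∀ i j, d i j = d j i)
    (hzero : ∀ i, d i i = 0)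
    (hpos : ∀ i j, i ≠ j → 0 < d i j)
    (htri : ∀ i j l, d i l ≤ d i j + d j l)
    (η : Fin n → ℝ) (hη : ∀ j, 0 ≤ η j) (hsum : 0 < ∑ j, η j)
    (v0 k : Fin n) :
    L1Cent (symDist d v0) (Sum.elim η η) (Sum.inl k) =
      L1Cent d (Function.update η v0 ((∑ j, η j) + η v0)) k := by
  classical
  set S := ∑ j, η j with hS
  set η' := Function.update η v0 (S + η v0) with hη'
  set N : Fin n → ℝ := fun j => (∑ i, η i * (d k i - d j i)) + S * (d k v0 - d j v0)
    with hN
  set f : Fin n → ℝ := fun j => max 0 (N j / (2 * S * d j k)) with hf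
  set g : Fin n → ℝ := fun j => max 0 (N j / (2 * S * (d j v0 + d v0 k))) with hg
  -- total mass in symmetrized graph
  have hsumelim : ∑ i : Fin n ⊕ Fin n, Sum.elim η η i = 2 * S := by
    rw [Fintype.sum_sum_type]
    simp only [Sum.elim_inl, Sum.elim_inr, ← hS]
    ring
  -- weighted sums against η'
  have hkey : ∀ G : Fin n → ℝ, ∑ i, η' i * G i = (∑ i, η i * G i) + S * G v0 := by
    intro G
    have h1 : ∀ i, η' i * G i = η i * G i + (if i = v0 then S * G v0 else 0) := by
      intro i
      by_cases h : i = v0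
      · subst h; simp [hη', Function.update_self]; ring
      · simp [hη', Function.update_of_ne h, h]
    calc ∑ i, η' i * G i
        = ∑ i, (η i * G i + (if i = v0 then S * G v0 else 0)) :=
          Finset.sum_congr rfl fun i _ => h1 i
      _ = (∑ i, η i * G i) + ∑ i, (if i = v0 then S * G v0 else 0) :=
          Finset.sum_add_distrib
      _ = (∑ i, η i * G i) + S * G v0 := by
          rw [Finset.sum_ite_eq' Finset.univ v0 (fun _ => S * G v0)]
          simp
  have hsumη' : ∑ i, η' i = 2 * S := by
    have h := hkey (fun _ => 1)
    simp only [mul_one] at h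
    have hS' : ∑ i, η i = S := hS.symm
    linarith
  -- numerators
  have ninl : ∀ j : Fin n,
      (∑ i : Fin n ⊕ Fin n, Sum.elim η η i *
        (symDist d v0 (Sum.inl k) i - symDist d v0 (Sum.inl j) i)) = N j := by
    intro j
    rw [Fintype.sum_sum_type]
    simp only [Sum.elim_inl, Sum.elim_inr, symDist]
    have h2 : ∑ b, η b * (d k v0 + d v0 b - (d j v0 + d v0 b))
        = S * (d k v0 - d j v0) := by
      rw [show (∑ b, η b * (d k v0 + d v0 b - (d j v0 + d v0 b)))
          = ∑ b, η b * (d k v0 - d j v0) from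
        Finset.sum_congr rfl fun b _ => by ring]
      rw [← Finset.sum_mul, ← hS]
    rw [h2]
  have ninr : ∀ j : Fin n,
      (∑ i : Fin n ⊕ Fin n, Sum.elim η η i *
        (symDist d v0 (Sum.inl k) i - symDist d v0 (Sum.inr j) i)) = N j := by
    intro j
    rw [Fintype.sum_sum_type]
    simp only [Sum.elim_inl, Sum.elim_inr, symDist]
    rw [← Finset.sum_add_distrib]
    rw [show (∑ a, (η a * (d k a - (d j v0 + d v0 a)) +
          η a * (d k v0 + d v0 a - d j a)))
        = ∑ a, (η a * (d k a - d j a) + η a * (d k v0 - d j v0)) from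
      Finset.sum_congr rfl fun a _ => by ring]
    rw [Finset.sum_add_distrib, ← Finset.sum_mul, ← hS]
  -- rewrite the two images
  have hfun1 : (fun j : Fin n ⊕ Fin n => max 0
      ((∑ i, Sum.elim η η i * (symDist d v0 (Sum.inl k) i - symDist d v0 j i)) /
        ((∑ i, Sum.elim η η i) * symDist d v0 j (Sum.inl k)))) = Sum.elim f g := by
    funext j
    cases j with
    | inl j =>
        simp only [Sum.elim_inl, hf]
        rw [ninl j, hsumelim]
        rfl
    | inr j =>
        simp only [Sum.elim_inr, hg]
        rw [ninr j, hsumelim]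
        rfl
  have hfun2 : (fun j : Fin n => max 0
      ((∑ i, η' i * (d k i - d j i)) / ((∑ i, η' i) * d j k))) = f := by
    funext j
    rw [hkey, hsumη']
  unfold L1Cent
  rw [hfun1, hfun2]
  congr 1
  -- key sSup equality
  have hS2 : (0:ℝ) < 2 * S := by linarith
  have hd : ∀ a b : Fin n, 0 ≤ d a b := by
    intro a b
    rcases eq_or_ne a b with rfl | h
    · simp [hzero]
    · exact (hpos a b h).le
  have hfnonneg : ∀ j, 0 ≤ f j := fun j => le_max_left _ _
  have hginrk : g k = 0 := by
    simp [hg, hN]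
  have hg_le_f : ∀ j : Fin n, j ≠ k → g j ≤ f j := by
    intro j hjk
    have hdjk : 0 < d j k := hpos j k hjk
    have hden1 : 0 < 2 * S * d j k := mul_pos hS2 hdjk
    have hden2 : 2 * S * d j k ≤ 2 * S * (d j v0 + d v0 k) := by
      apply mul_le_mul_of_nonneg_left (htri j v0 k) (le_of_lt hS2)
    rcases le_or_gt (N j) 0 with hNle | hNpos
    · have : N j / (2 * S * (d j v0 + d v0 k)) ≤ 0 :=
        div_nonpos_iff.2 (Or.inr ⟨hNle, mul_nonneg hS2.le (by linarith [hd j v0, hd v0 k])⟩)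
      simp only [hg]
      calc max 0 (N j / (2 * S * (d j v0 + d v0 k))) = 0 := max_eq_left this
        _ ≤ f j := hfnonneg j
    · have hdiv : N j / (2 * S * (d j v0 + d v0 k)) ≤ N j / (2 * S * d j k) :=
        div_le_div_of_nonneg_left (le_of_lt hNpos) hden1 hden2
      exact max_le_max le_rfl hdiv
  have hA'bdd : BddAbove (Sum.elim f g '' {j | j ≠ Sum.inl k}) :=
    (Set.toFinite _).bddAbove
  have hAbdd : BddAbove (f '' {j | j ≠ k}) := (Set.toFinite _).bddAbove
  have hA'ne : (Sum.elim f g '' {j | j ≠ Sum.inl k}).Nonempty :=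
    ⟨Sum.elim f g (Sum.inr k), ⟨Sum.inr k, by simp, rfl⟩⟩
  by_cases hA : ({j : Fin n | j ≠ k}).Nonempty
  · have hAne : (f '' {j | j ≠ k}).Nonempty := hA.image f
    obtain ⟨j0, hj0⟩ := hA
    have h0 : 0 ≤ sSup (f '' {j | j ≠ k}) :=
      le_trans (hfnonneg j0) (le_csSup hAbdd ⟨j0, hj0, rfl⟩)
    apply le_antisymm
    · apply csSup_le hA'ne
      rintro x ⟨j, hj, rfl⟩
      cases j with
      | inl j =>
          have hjk : j ≠ k := fun h => hj (by rw [h])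
          exact le_csSup hAbdd ⟨j, hjk, rfl⟩
      | inr j =>
          by_cases hjk : j = k
          · subst hjk
            simpa [hginrk] using h0
          · exact le_trans (hg_le_f j hjk) (le_csSup hAbdd ⟨j, hjk, rfl⟩)
    · apply csSup_le hAne
      rintro x ⟨j, hj, rfl⟩
      exact le_csSup hA'bdd ⟨Sum.inl j, by simpa using hj, rfl⟩
  · have hall : ∀ j : Fin n, j = k := by
      intro j
      by_contra h
      exact hA ⟨j, h⟩
    have hset1 : {j : Fin n | j ≠ k} = ∅ := by
      ext j; simp [hall j]
    have hset2 : {j : Fin n ⊕ Fin n | j ≠ Sum.inl k} = {Sum.inr k} := by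
      ext j
      cases j with
      | inl j => simp [hall j]
      | inr j => simp [hall j]
    rw [hset1, hset2]
    simp [hginrk, Real.sSup_empty]
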